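/- Let T be a tree and c a pure 2-cycle of the minority process on T. If e=(u,w) is an edge with c(u)≠c(w), then deg(u)≥3 and deg(w)≥3, the two components T_u, T_w of T after removing e each contain at least 3 nodes, and c restricted to each component is again a pure 2-cycle of the minority process on that component. -/

import Mathlib

open SimpleGraph Finset
open scoped Classical

variable {V : Type*}

/-- Number of neighbors of `v` with the same color as `v`. -/
noncomputable def sameCount (G : SimpleGraph V) [Fintype V] (c : V → Bool) (v : V) : ℕ :=
  ((G.neighborFinset v).filter fun u => c u = c v).card

/-- Number of neighbors of `v` with the opposite color. -/
noncomputable def diffCount (G : SimpleGraph V) [Fintype V] (c : V → Bool) (v : V) : ℕ :=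
  ((G.neighborFinset v).filter fun u => c u ≠ c v).card

/-- One round of the minority process. -/
noncomputable def minStep (G : SimpleGraph V) [Fintype V] (c : V → Bool) : V → Bool :=
  fun v => if sameCount G c v ≤ diffCount G c v then c v else !c v

/-- One round of the majority process. -/
noncomputable def majStep (G : SimpleGraph V) [Fintype V] (c : V → Bool) : V → Bool :=
  fun v => if diffCount G c v ≤ sameCount G c v then c v else !c v

/-- Number of edges of `F` incident to `v`. -/
noncomputable def incCount (F : Finset (Sym2 V)) (v : V) : ℕ :=
  (F.filter fun e => v ∈ e).card

/-- The monochromatic edges of a coloring. -/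
noncomputable def monoEdges (G : SimpleGraph V) [Fintype V] (c : V → Bool) : Finset (Sym2 V) :=
  G.edgeFinset.filter fun e => ∀ x ∈ e, ∀ y ∈ e, c x = c y

/-- The multichromatic edges of a coloring. -/
noncomputable def multiEdges (G : SimpleGraph V) [Fintype V] (c : V → Bool) : Finset (Sym2 V) :=
  G.edgeFinset.filter fun e => ∃ x ∈ e, ∃ y ∈ e, c x ≠ c y

lemma lemA [Fintype V] (G : SimpleGraph V) (c : V → Bool)
    (h : ∀ v, minStep G c v ≠ c v) : ∀ v, diffCount G c v < sameCount G c v := by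
  intro v
  rw [← not_le]
  intro hle
  exact h v (by simp [minStep, hle])

lemma lemB [Fintype V] (G : SimpleGraph V) (c : V → Bool)
    (h : ∀ v, diffCount G c v < sameCount G c v) :
    (∀ v, minStep G c v ≠ c v) ∧ minStep G (minStep G c) = c := by
  have hstep : minStep G c = fun v => !c v := by
    funext v
    simp [minStep, not_le.mpr (h v)]
  constructor
  · intro v
    rw [hstep]
    exact Bool.not_ne_self (c v)
  · have hsame : ∀ v, sameCount G (fun x => !c x) v = sameCount G c v := by
      intro v; unfold sameCount; congr 1; apply Finset.filter_congr; intro x _; simp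
    have hdiff : ∀ v, diffCount G (fun x => !c x) v = diffCount G c v := by
      intro v; unfold diffCount; congr 1; apply Finset.filter_congr; intro x _; simp
    rw [hstep]
    funext v
    simp [minStep, hsame, hdiff, not_le.mpr (h v)]

lemma side [Fintype V] (G : SimpleGraph V) (hT : G.IsTree) (c : V → Bool)
    (hlt : ∀ v, diffCount G c v < sameCount G c v)
    (u w : V) (huw : G.Adj u w) (hcuw : c u ≠ c w) :
    3 ≤ G.degree u ∧
    3 ≤ Set.ncard {v | (G.deleteEdges {s(u, w)}).Reachable u v} ∧
    (∀ x : {v | (G.deleteEdges {s(u, w)}).Reachable u v},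
      diffCount (G.induce {v | (G.deleteEdges {s(u, w)}).Reachable u v}) (fun y => c y.1) x
        < sameCount (G.induce {v | (G.deleteEdges {s(u, w)}).Reachable u v}) (fun y => c y.1) x) := by
  set S : Set V := {v | (G.deleteEdges {s(u, w)}).Reachable u v} with hS
  -- w is not in S (bridge)
  have hbridge : ¬ (G.deleteEdges {s(u, w)}).Reachable u w := by
    have := (isAcyclic_iff_forall_adj_isBridge.mp hT.IsAcyclic) huw
    exact isBridge_iff.mp this
  have hwS : w ∉ S := hbridge
  have huS : u ∈ S := Reachable.refl u
  -- neighbors stay in S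
  have hnb : ∀ x ∈ S, ∀ y, G.Adj x y → (x = u → y ≠ w) → y ∈ S := by
    intro x hx y hxy hne
    have hedge : s(x, y) ≠ s(u, w) := by
      intro h
      rw [Sym2.eq_iff] at h
      rcases h with ⟨rfl, rfl⟩ | ⟨rfl, rfl⟩
      · exact hne rfl rfl
      · exact hwS hx
    have : (G.deleteEdges {s(u, w)}).Adj x y := by
      simp only [deleteEdges_adj, Set.mem_singleton_iff]
      exact ⟨hxy, hedge⟩
    exact (hx : (G.deleteEdges {s(u,w)}).Reachable u x).trans this.reachable
  -- same-color neighbors of u are in S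
  have hsameS : ∀ x ∈ S, ∀ y, G.Adj x y → c y = c x → y ∈ S := by
    intro x hx y hxy hcy
    refine hnb x hx y hxy ?_
    rintro rfl rfl
    exact hcuw hcy.symm
  -- counts
  have hdeg : ∀ v, G.degree v = sameCount G c v + diffCount G c v := by
    intro v
    rw [← card_neighborFinset_eq_degree]
    exact (Finset.card_filter_add_card_filter_not (fun x => c x = c v)).symm
  have hdiffu : 1 ≤ diffCount G c u := by
    refine Finset.card_pos.mpr ⟨w, ?_⟩
    simp [mem_neighborFinset, huw, Ne.symm hcuw]
  have hsameu : 2 ≤ sameCount G c u := lt_of_le_of_lt hdiffu (hlt u)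
  refine ⟨?_, ?_, ?_⟩
  · rw [hdeg u]; omega
  · -- ncard ≥ 3
    have h2 : 1 < ((G.neighborFinset u).filter fun x => c x = c u).card := hsameu
    obtain ⟨y₁, hy₁, y₂, hy₂, hne⟩ := Finset.one_lt_card.mp h2
    simp only [Finset.mem_filter, mem_neighborFinset] at hy₁ hy₂
    have hy₁S : y₁ ∈ S := hsameS u huS y₁ hy₁.1 hy₁.2
    have hy₂S : y₂ ∈ S := hsameS u huS y₂ hy₂.1 hy₂.2
    have hy₁u : y₁ ≠ u := fun h => G.irrefl (h ▸ hy₁.1)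
    have hy₂u : y₂ ≠ u := fun h => G.irrefl (h ▸ hy₂.1)
    rw [Set.ncard_eq_toFinset_card']
    have hsub : ({u, y₁, y₂} : Finset V) ⊆ S.toFinset := by
      intro z hz
      simp only [Finset.mem_insert, Finset.mem_singleton] at hz
      rw [Set.mem_toFinset]
      rcases hz with rfl | rfl | rfl <;> assumption
    calc 3 = ({u, y₁, y₂} : Finset V).card := by
            rw [Finset.card_insert_of_notMem (by simp [Ne.symm hy₁u, Ne.symm hy₂u]),
              Finset.card_insert_of_notMem (by simp [hne]), Finset.card_singleton]
      _ ≤ S.toFinset.card := Finset.card_le_card hsub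
  · -- induced counts
    intro x
    have hdiffle : diffCount (G.induce S) (fun y => c y.1) x ≤ diffCount G c x.1 := by
      apply Finset.card_le_card_of_injOn Subtype.val
      · intro a ha
        simp only [Finset.mem_coe, Finset.mem_filter, mem_neighborFinset, comap_adj,
          Function.Embedding.coe_subtype] at ha ⊢
        exact ha
      · exact fun a _ b _ h => Subtype.val_injective h
    have hsameeq : sameCount (G.induce S) (fun y => c y.1) x = sameCount G c x.1 := by
      apply Finset.card_bij (fun a _ => a.1)
      · intro a ha
        simp only [Finset.mem_filter, mem_neighborFinset, comap_adj,
          Function.Embedding.coe_subtype] at ha ⊢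
        exact ha
      · intro a _ b _ h
        exact Subtype.val_injective h
      · intro y hy
        simp only [Finset.mem_filter, mem_neighborFinset] at hy
        have hyS : y ∈ S := hsameS x.1 x.2 y hy.1 hy.2
        refine ⟨⟨y, hyS⟩, ?_, rfl⟩
        simp only [Finset.mem_filter, mem_neighborFinset, comap_adj,
          Function.Embedding.coe_subtype]
        exact hy
    rw [hsameeq]
    exact lt_of_le_of_lt hdiffle (hlt x.1)

theorem stmt14 [Fintype V] (G : SimpleGraph V) (hT : G.IsTree) (c : V → Bool)
    (hpure : (∀ v, minStep G c v ≠ c v) ∧ minStep G (minStep G c) = c)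
    (u w : V) (huw : G.Adj u w) (hcuw : c u ≠ c w) :
    3 ≤ G.degree u ∧ 3 ≤ G.degree w ∧
    3 ≤ Set.ncard {v | (G.deleteEdges {s(u, w)}).Reachable u v} ∧
    3 ≤ Set.ncard {v | (G.deleteEdges {s(u, w)}).Reachable w v} ∧
    ((∀ x, minStep (G.induce {v | (G.deleteEdges {s(u, w)}).Reachable u v})
        (fun y => c y.1) x ≠ c x.1) ∧
      minStep (G.induce {v | (G.deleteEdges {s(u, w)}).Reachable u v})
        (minStep (G.induce {v | (G.deleteEdges {s(u, w)}).Reachable u v}) (fun y => c y.1)) =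
        fun y => c y.1) ∧
    ((∀ x, minStep (G.induce {v | (G.deleteEdges {s(u, w)}).Reachable w v})
        (fun y => c y.1) x ≠ c x.1) ∧
      minStep (G.induce {v | (G.deleteEdges {s(u, w)}).Reachable w v})
        (minStep (G.induce {v | (G.deleteEdges {s(u, w)}).Reachable w v}) (fun y => c y.1)) =
        fun y => c y.1) := by
  have hlt := lemA G c hpure.1
  obtain ⟨hdu, hnu, hiu⟩ := side G hT c hlt u w huw hcuw
  have hside2 := side G hT c hlt w u huw.symm (Ne.symm hcuw)
  rw [show s(w, u) = s(u, w) from Sym2.eq_swap] at hside2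
  obtain ⟨hdw, hnw, hiw⟩ := hside2
  exact ⟨hdu, hdw, hnu, hnw, lemB _ _ hiu, lemB _ _ hiw⟩
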